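/- The lamplighter group C₂ ≀ C_∞ = (⊕_{n∈ℤ} ℤ/2ℤ) ⋊ ℤ has asymptotic dimension 1. -/

import Mathlib

def cayley (G : Type*) [Group G] (X : Set G) : SimpleGraph G :=
  SimpleGraph.fromRel (fun g h => ∃ x ∈ X, h = g * x)

def AsdimLE {V : Type*} (G : SimpleGraph V) (n : ℕ) : Prop :=
  ∀ m : ℕ, 0 < m → ∃ (ι : Type) (f : V → ι) (col : ι → Fin (n + 1)) (D : ℕ),
    (∀ u v : V, f u = f v → G.dist u v ≤ D) ∧
    (∀ u v : V, f u ≠ f v → col (f u) = col (f v) → m < G.dist u v)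

def GroupAsdimLE (G : Type*) [Group G] (n : ℕ) : Prop :=
  ∀ X : Finset G, Subgroup.closure (X : Set G) = ⊤ → AsdimLE (cayley G (X : Set G)) n

/-- The shift action of `ℤ` on `⊕_{n ∈ ℤ} ℤ/2ℤ` (finitely supported functions),
translating coordinates. -/
noncomputable def lampShift : Multiplicative ℤ →* MulAut (Multiplicative (ℤ →₀ ZMod 2)) :=
  MonoidHom.mk'
    (fun n => AddEquiv.toMultiplicative (Finsupp.domCongr (Equiv.addRight n.toAdd)))
    (by
      intro a b
      ext f i
      show Finsupp.equivMapDomain _ _ i = Finsupp.equivMapDomain _ (Finsupp.equivMapDomain _ _) i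
      simp [Finsupp.equivMapDomain_apply, Equiv.addRight, sub_sub, add_assoc, add_comm,
        add_left_comm])

/-- The lamplighter group `C₂ ≀ C_∞ = (⊕_{n ∈ ℤ} ℤ/2ℤ) ⋊ ℤ`. -/
abbrev Lamplighter : Type :=
  SemidirectProduct (Multiplicative (ℤ →₀ ZMod 2)) (Multiplicative ℤ) lampShift

namespace LampAux

def pii (g : Lamplighter) : ℤ := Multiplicative.toAdd g.right
def lamps (g : Lamplighter) : ℤ →₀ ZMod 2 := Multiplicative.toAdd g.left

lemma lampShift_apply (t : Multiplicative ℤ) (g : Multiplicative (ℤ →₀ ZMod 2)) (i : ℤ) :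
    Multiplicative.toAdd (lampShift t g) i =
      Multiplicative.toAdd g (i - Multiplicative.toAdd t) := rfl

lemma pii_mul (u v : Lamplighter) : pii (u * v) = pii u + pii v := by
  simp [pii, SemidirectProduct.mul_right]

lemma lamps_mul (u v : Lamplighter) (i : ℤ) :
    lamps (u * v) i = lamps u i + lamps v (i - pii u) := by
  simp only [lamps, pii, SemidirectProduct.mul_left, toAdd_mul, Finsupp.add_apply,
    lampShift_apply]

section Cayley
variable {G : Type*} [Group G] (X : Set G)

lemma cayley_adj {u v : G} :
    (cayley G X).Adj u v ↔ u ≠ v ∧ ((∃ x ∈ X, v = u * x) ∨ ∃ x ∈ X, u = v * x) :=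
  SimpleGraph.fromRel_adj _ _ _
end Cayley

variable (Xf : Finset Lamplighter)

/-- constant bounding generators -/
def K : ℕ :=
  (Xf.sup fun x => max (pii x).natAbs ((lamps x).support.sup fun p => p.natAbs)) + 1

lemma one_le_K : 1 ≤ K Xf := Nat.le_add_left 1 _

lemma pii_bound {x : Lamplighter} (hx : x ∈ Xf) : (pii x).natAbs ≤ K Xf := by
  have h1 : (pii x).natAbs ≤ max (pii x).natAbs ((lamps x).support.sup fun p => p.natAbs) :=
    le_max_left _ _
  have h2 : max (pii x).natAbs ((lamps x).support.sup fun p => p.natAbs) ≤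
      Xf.sup fun x => max (pii x).natAbs ((lamps x).support.sup fun p => p.natAbs) := by
    exact Finset.le_sup (f := fun x => max (pii x).natAbs
      ((lamps x).support.sup fun p => p.natAbs)) hx
  exact le_trans (le_trans h1 h2) (Nat.le_succ _)

lemma lamps_bound {x : Lamplighter} (hx : x ∈ Xf) {p : ℤ} (hp : lamps x p ≠ 0) :
    p.natAbs ≤ K Xf := by
  have h1 : p ∈ (lamps x).support := Finsupp.mem_support_iff.mpr hp
  have h2 : p.natAbs ≤ (lamps x).support.sup (fun p => p.natAbs) := Finset.le_sup h1
  have h3 : ((lamps x).support.sup fun p => p.natAbs) ≤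
      max (pii x).natAbs ((lamps x).support.sup fun p => p.natAbs) := le_max_right _ _
  have h4 : max (pii x).natAbs ((lamps x).support.sup fun p => p.natAbs) ≤
      Xf.sup fun x => max (pii x).natAbs ((lamps x).support.sup fun p => p.natAbs) := by
    exact Finset.le_sup (f := fun x => max (pii x).natAbs
      ((lamps x).support.sup fun p => p.natAbs)) hx
  exact le_trans (le_trans h2 h3) (le_trans h4 (Nat.le_succ _))

lemma adj_pii {u v : Lamplighter} (h : (cayley Lamplighter (↑Xf)).Adj u v) :
    (pii u - pii v).natAbs ≤ K Xf := by
  rw [cayley_adj] at h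
  obtain ⟨-, ⟨x, hx, rfl⟩ | ⟨x, hx, rfl⟩⟩ := h
  · have := pii_bound Xf hx
    rw [pii_mul]; omega
  · have := pii_bound Xf hx
    rw [pii_mul]; omega

lemma adj_lamps {u v : Lamplighter} (h : (cayley Lamplighter (↑Xf)).Adj u v) {p : ℤ}
    (hp : lamps u p ≠ lamps v p) : (p - pii u).natAbs ≤ 2 * K Xf := by
  rw [cayley_adj] at h
  obtain ⟨-, ⟨x, hx, rfl⟩ | ⟨x, hx, rfl⟩⟩ := h
  · have h1 : lamps x (p - pii u) ≠ 0 := by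
      intro h0
      apply hp
      rw [lamps_mul, h0, add_zero]
    have := lamps_bound Xf hx h1
    omega
  · have h1 : lamps x (p - pii v) ≠ 0 := by
      intro h0
      apply hp
      rw [lamps_mul, h0, add_zero]
    have h2 := lamps_bound Xf hx h1
    have h3 := pii_bound Xf hx
    rw [pii_mul]
    omega

lemma walk_pii {u v : Lamplighter} (w : (cayley Lamplighter (↑Xf)).Walk u v) :
    (pii u - pii v).natAbs ≤ K Xf * w.length := by
  induction w with
  | nil => simp
  | cons h w ih =>
      rename_i a b c
      have h1 := adj_pii Xf h
      rw [SimpleGraph.Walk.length_cons]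
      have h2 : K Xf * (w.length + 1) = K Xf * w.length + K Xf := by ring
      omega

lemma walk_lamps {u v : Lamplighter} (w : (cayley Lamplighter (↑Xf)).Walk u v) {p : ℤ}
    (hp : lamps u p ≠ lamps v p) : (p - pii u).natAbs ≤ K Xf * w.length + K Xf := by
  induction w with
  | nil => exact absurd rfl hp
  | cons h w ih =>
      rename_i a b c
      rw [SimpleGraph.Walk.length_cons]
      have h2 : K Xf * (w.length + 1) = K Xf * w.length + K Xf := by ring
      by_cases hb : lamps a p = lamps b p
      · have h3 := ih (hb ▸ hp)
        have h4 := adj_pii Xf h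
        omega
      · have h5 := adj_lamps Xf h hb
        have h6 : 0 ≤ K Xf * w.length := Nat.zero_le _
        omega



section Cayley2
variable {G : Type*} [Group G] (X : Set G)

def mulIso (g : G) : cayley G X ≃g cayley G X where
  toEquiv := Equiv.mulLeft g
  map_rel_iff' := by
    intro a b
    simp [cayley_adj, mul_assoc]

lemma reachable_mul_left (g : G) {u v : G} (h : (cayley G X).Reachable u v) :
    (cayley G X).Reachable (g * u) (g * v) :=
  h.map (mulIso X g).toHom

lemma dist_mul_left_le (g u v : G) :
    (cayley G X).dist (g * u) (g * v) ≤ (cayley G X).dist u v := by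
  by_cases h : (cayley G X).Reachable u v
  · obtain ⟨p, hp⟩ := h.exists_walk_length_eq_dist
    calc (cayley G X).dist (g * u) (g * v) ≤ (p.map (mulIso X g).toHom).length :=
          SimpleGraph.dist_le _
      _ = (cayley G X).dist u v := by rw [SimpleGraph.Walk.length_map, hp]
  · have h2 : ¬ (cayley G X).Reachable (g * u) (g * v) := by
      intro h2
      exact h (by simpa using reachable_mul_left X g⁻¹ h2)
    rw [SimpleGraph.dist_eq_zero_of_not_reachable h2]
    exact Nat.zero_le _

lemma dist_mul_left (g u v : G) :
    (cayley G X).dist (g * u) (g * v) = (cayley G X).dist u v := by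
  refine le_antisymm (dist_mul_left_le X g u v) ?_
  have := dist_mul_left_le X g⁻¹ (g * u) (g * v)
  simpa using this

lemma reachable_cayley (hX : Subgroup.closure X = ⊤) (u v : G) :
    (cayley G X).Reachable u v := by
  suffices h : ∀ g : G, (cayley G X).Reachable 1 g by
    have h1 := reachable_mul_left X u (h (u⁻¹ * v))
    simpa using h1
  intro g
  have hg : g ∈ Subgroup.closure X := by rw [hX]; exact Subgroup.mem_top g
  induction hg using Subgroup.closure_induction with
  | mem x hx =>
      by_cases hx1 : x = 1
      · rw [hx1]
      · exact SimpleGraph.Adj.reachable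
          ((cayley_adj X).mpr ⟨Ne.symm hx1, Or.inl ⟨x, hx, (one_mul x).symm⟩⟩)
  | one => rfl
  | mul x y hx hy px py =>
      refine px.trans ?_
      have := reachable_mul_left X x py
      simpa using this
  | inv x hx px =>
      have := reachable_mul_left X x⁻¹ px
      simp only [mul_one, inv_mul_cancel] at this
      exact this.symm

end Cayley2

lemma natAbs_gt {a b : ℤ} {n : ℕ} (h : a + n < b ∨ b + n < a) : n < (a - b).natAbs := by
  omega

lemma final_arith {Kc m d n : ℕ} (hK : 1 ≤ Kc) (h1 : Kc * m + Kc < n) (h2 : n ≤ Kc * d) :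
    m < d := by
  by_contra hd
  push_neg at hd
  have h3 : Kc * d ≤ Kc * m := Nat.mul_le_mul le_rfl hd
  linarith

lemma final_arith' {Kc m d n : ℕ} (hK : 1 ≤ Kc) (h1 : Kc * m + 2 * Kc < n)
    (h2 : n ≤ Kc * d + Kc) : m < d := by
  by_contra hd
  push_neg at hd
  have h3 : Kc * d ≤ Kc * m := Nat.mul_le_mul le_rfl hd
  linarith

end LampAux

open LampAux

/-- The lamplighter group has asymptotic dimension 1: asymptotic dimension at most 1,
and the group is infinite (hence of asymptotic dimension exactly 1). -/
theorem lamplighter_asdim_one : GroupAsdimLE Lamplighter 1 ∧ Infinite Lamplighter := by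
  constructor
  · intro Xf hX m hm
    classical
    have hreach := reachable_cayley ((Xf : Set Lamplighter)) hX
    set Kc := K Xf with hKc
    have hK : 1 ≤ Kc := one_le_K Xf
    set Ln : ℕ := Kc * m + Kc with hLn
    set Rn : ℕ := Kc * m + 2 * Kc with hRn
    set L : ℤ := (Ln : ℤ) with hL
    set R : ℤ := (Rn : ℤ) with hR
    have hLK : (0:ℤ) ≤ (Kc * m : ℕ) := by positivity
    have hLpos : 0 < L := by
      have h1 : 1 ≤ Ln := le_trans hK (Nat.le_add_left _ _)
      rw [hL]; exact_mod_cast h1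
    have hRpos : 0 ≤ R := by
      rw [hR]; positivity
    set jdx : Lamplighter → ℤ := fun u => pii u / L with hjdx
    set idx : Lamplighter → ℤ × (ℤ →₀ ZMod 2) := fun u =>
      (jdx u, (lamps u).filter (fun p => p < jdx u * L - R ∨ jdx u * L + L + R ≤ p)) with hidx
    have hinterval : ∀ w : Lamplighter, jdx w * L ≤ pii w ∧ pii w < jdx w * L + L := by
      intro w
      have e1 : 0 ≤ pii w % L := Int.emod_nonneg _ (ne_of_gt hLpos)
      have e2 : pii w % L < L := Int.emod_lt_of_pos _ hLpos
      have e3 : pii w % L = pii w - L * (pii w / L) := Int.emod_def _ _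
      constructor <;> simp only [hjdx] <;> linarith
    set S : Set Lamplighter := {w | 0 ≤ pii w ∧ pii w < L ∧
      ∀ i : ℤ, lamps w i ≠ 0 → -R ≤ i ∧ i < L + R} with hS
    have hSfin : S.Finite := by
      set T : Finset ℤ := Finset.Icc (-R) (L + R) with hT
      set build : ({x : ℤ // x ∈ T} → ZMod 2) × {x : ℤ // x ∈ Finset.Ico (0:ℤ) L} → Lamplighter := fun q =>
        ⟨Multiplicative.ofAdd (Finsupp.onFinset T (fun i => if h : i ∈ T then q.1 ⟨i, h⟩ else 0)
           (fun i hi => by by_contra hmem; simp only [dif_neg hmem] at hi; exact hi rfl)),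
         Multiplicative.ofAdd (q.2 : ℤ)⟩ with hbuild
      apply Set.Finite.subset (Set.finite_range build)
      rintro w ⟨hw1, hw2, hw3⟩
      have hmem : pii w ∈ Finset.Ico (0:ℤ) L := Finset.mem_Ico.mpr ⟨hw1, hw2⟩
      refine ⟨⟨fun i => lamps w (i.1 : ℤ), ⟨pii w, hmem⟩⟩, ?_⟩
      apply SemidirectProduct.ext
      · show Multiplicative.ofAdd _ = w.left
        rw [← ofAdd_toAdd w.left]
        congr 1
        apply Finsupp.ext
        intro i
        rw [Finsupp.onFinset_apply]
        by_cases hiT : i ∈ T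
        · rw [dif_pos hiT]; rfl
        · rw [dif_neg hiT]
          by_contra hne
          apply hiT
          have h3 := hw3 i (Ne.symm hne)
          rw [hT, Finset.mem_Icc]
          exact ⟨h3.1, le_of_lt (lt_of_lt_of_le h3.2 (by linarith))⟩
      · show Multiplicative.ofAdd (pii w) = w.right
        exact ofAdd_toAdd w.right
    obtain ⟨D, hD⟩ : ∃ D : ℕ, ∀ a ∈ S, ∀ b ∈ S,
        (cayley Lamplighter (Xf : Set Lamplighter)).dist a b ≤ D := by
      obtain ⟨D, hD⟩ :=
        Set.Finite.bddAbove ((hSfin.image2 (cayley Lamplighter (Xf : Set Lamplighter)).dist) hSfin)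
      exact ⟨D, fun a ha b hb => hD (Set.mem_image2_of_mem ha hb)⟩
    refine ⟨ℤ × (ℤ →₀ ZMod 2), idx, fun q => if q.1 % 2 = 0 then 0 else 1, D, ?_, ?_⟩
    · -- bounded classes
      intro u v huv
      have hj : jdx v = jdx u := by
        have := congrArg Prod.fst huv
        simpa [hidx] using this.symm
      have hfil : (lamps v).filter (fun p => p < jdx u * L - R ∨ jdx u * L + L + R ≤ p) =
          (lamps u).filter (fun p => p < jdx u * L - R ∨ jdx u * L + L + R ≤ p) := by
        have := congrArg Prod.snd huv
        simp only [hidx] at this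
        rw [hj] at this
        exact this.symm
      set j : ℤ := jdx u with hjdef
      set g0 : ℤ →₀ ZMod 2 := (lamps u).filter (fun p => p < j * L - R ∨ j * L + L + R ≤ p)
        with hg0
      set h : Lamplighter := ⟨Multiplicative.ofAdd g0, Multiplicative.ofAdd (j * L)⟩ with hh
      have hpii_h : pii h = j * L := rfl
      have hlamps_h : ∀ i, lamps h i = g0 i := fun i => rfl
      have key : ∀ w : Lamplighter, jdx w = j →
          (lamps w).filter (fun p => p < j * L - R ∨ j * L + L + R ≤ p) = g0 → h⁻¹ * w ∈ S := by
        intro w hjw hfw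
        have hs : h * (h⁻¹ * w) = w := by group
        have hpw : pii w = j * L + pii (h⁻¹ * w) := by
          conv_lhs => rw [← hs]
          rw [pii_mul, hpii_h]
        have hint := hinterval w
        rw [hjw] at hint
        refine ⟨by linarith [hint.1], by linarith [hint.2], ?_⟩
        intro i hi
        by_contra hcon
        push_neg at hcon
        have hPout : (i + j * L) < j * L - R ∨ j * L + L + R ≤ (i + j * L) := by
          rcases lt_or_ge i (-R) with hc | hc
          · left; linarith
          · right
            have := hcon hc
            linarith
        have hmul := lamps_mul h (h⁻¹ * w) (i + j * L)
        rw [hs, hpii_h, add_sub_cancel_right, hlamps_h] at hmul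
        have hgval : g0 (i + j * L) = lamps u (i + j * L) := by
          rw [hg0]
          exact Finsupp.filter_apply_pos (fun q => q < j * L - R ∨ j * L + L + R ≤ q)
            (lamps u) hPout
        have hwval : lamps w (i + j * L) = lamps u (i + j * L) := by
          have h1 : ((lamps w).filter (fun p => p < j * L - R ∨ j * L + L + R ≤ p)) (i + j * L)
              = lamps w (i + j * L) :=
            Finsupp.filter_apply_pos (fun q => q < j * L - R ∨ j * L + L + R ≤ q)
              (lamps w) hPout
          rw [hfw] at h1
          rw [← h1, ← hgval]
        rw [hwval, hgval] at hmul
        exact hi (left_eq_add.mp hmul)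
      have hu' : h⁻¹ * u ∈ S := key u rfl rfl
      have hv' : h⁻¹ * v ∈ S := key v hj hfil
      have hdist := dist_mul_left (Xf : Set Lamplighter) h⁻¹ u v
      rw [← hdist]
      exact hD _ hu' _ hv'
    · -- separation
      intro u v hne hcol
      set j : ℤ := jdx u with hjdef
      set j' : ℤ := jdx v with hjdef'
      have hcol' : (if j % 2 = 0 then (0 : Fin 2) else 1) =
          (if j' % 2 = 0 then (0 : Fin 2) else 1) := by
        simpa [hidx, ← hjdef, ← hjdef'] using hcol
      have hpar : j % 2 = j' % 2 := by
        by_cases h1 : j % 2 = 0 <;> by_cases h2 : j' % 2 = 0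
        · rw [h1, h2]
        · rw [if_pos h1, if_neg h2] at hcol'; exact absurd hcol' (by decide)
        · rw [if_neg h1, if_pos h2] at hcol'; exact absurd hcol' (by decide)
        · omega
      obtain ⟨w, hwlen⟩ := (hreach u v).exists_walk_length_eq_dist
      have hintu := hinterval u
      have hintv := hinterval v
      rw [← hjdef] at hintu
      rw [← hjdef'] at hintv
      by_cases hjj : j = j'
      · -- lamps differ far away
        have hfil : (lamps u).filter (fun p => p < j * L - R ∨ j * L + L + R ≤ p) ≠
            (lamps v).filter (fun p => p < j * L - R ∨ j * L + L + R ≤ p) := by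
          intro hcontra
          apply hne
          simp only [hidx, ← hjdef, ← hjdef', ← hjj]
          simp only [Prod.mk.injEq]
          exact ⟨trivial, hcontra⟩
        obtain ⟨p, hp⟩ := Finsupp.ne_iff.mp hfil
        have hPout : p < j * L - R ∨ j * L + L + R ≤ p := by
          by_contra hcon
          rw [Finsupp.filter_apply_neg (fun q => q < j * L - R ∨ j * L + L + R ≤ q)
              (lamps u) hcon,
            Finsupp.filter_apply_neg (fun q => q < j * L - R ∨ j * L + L + R ≤ q)
              (lamps v) hcon] at hp
          exact hp rfl
        rw [Finsupp.filter_apply_pos (fun q => q < j * L - R ∨ j * L + L + R ≤ q)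
            (lamps u) hPout,
          Finsupp.filter_apply_pos (fun q => q < j * L - R ∨ j * L + L + R ≤ q)
            (lamps v) hPout] at hp
        have hwalk := walk_lamps Xf w hp
        rw [hwlen] at hwalk
        have hgap : p + (Rn : ℤ) < pii u ∨ pii u + (Rn : ℤ) < p := by
          rcases hPout with hc | hc
          · left; rw [← hR]; linarith [hintu.1]
          · right; rw [← hR]; linarith [hintu.2]
        have habs := natAbs_gt hgap
        have habs2 : Rn < (pii u - p).natAbs := by omega
        have habs3 : (p - pii u).natAbs = (pii u - p).natAbs := by omega
        have hlt : Kc * m + 2 * Kc < (p - pii u).natAbs := by rw [← hRn]; omega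
        exact final_arith' hK hlt hwalk
      · -- intervals differ
        have hj2 : j + 2 ≤ j' ∨ j' + 2 ≤ j := by omega
        have hgap : pii u + (Ln : ℤ) < pii v ∨ pii v + (Ln : ℤ) < pii u := by
          rcases hj2 with hc | hc
          · left
            have hmul : j * L + 2 * L ≤ j' * L := by nlinarith
            rw [← hL]
            linarith [hintu.2, hintv.1]
          · right
            have hmul : j' * L + 2 * L ≤ j * L := by nlinarith
            rw [← hL]
            linarith [hintu.1, hintv.2]
        have habs := natAbs_gt hgap
        have hwalk := walk_pii Xf w
        rw [hwlen] at hwalk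
        have hlt : Kc * m + Kc < (pii u - pii v).natAbs := by rw [← hLn]; omega
        exact final_arith hK hlt hwalk
  · exact Infinite.of_injective _ SemidirectProduct.inr_injective
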